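/- Suppose f : ℕ → ℕ satisfies f(n) ~ a n^α as n → ∞ with a > 0 and 0 < α < 1. Define s_1 = 1 and s_{m+1} = s_m + f(s_1 + ... + s_m). Then s_m ~ d m^γ as m → ∞, where γ = (1+α)/(1-α) and d = (a(1-α)^{1+α} / (2^α (1+α)))^{1/(1-α)}. -/

import Mathlib

open Filter Real
set_option maxHeartbeats 1000000


lemma my_sum_lower {v u : ℕ → ℝ} (hv : ∀ m, 0 ≤ v m)
    (hrec : ∀ᶠ (m : ℕ) in atTop, v m + u m ≤ v (m + 1))
    {c p : ℝ} (hc : 0 < c) (hp : 0 ≤ p) (hu : ∀ᶠ (m : ℕ) in atTop, c * (m : ℝ) ^ p ≤ u m) :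
    ∃ c' > 0, ∀ᶠ (m : ℕ) in atTop, c' * (m : ℝ) ^ (p + 1) ≤ v m := by
  obtain ⟨N, hN⟩ := eventually_atTop.1 (hrec.and hu)
  -- telescoping
  have key : ∀ m, N ≤ m → v N + ∑ k ∈ Finset.Ico N m, u k ≤ v m := by
    intro m hm
    induction m, hm using Nat.le_induction with
    | base => simp
    | succ m hm ih =>
      rw [Finset.sum_Ico_succ_top hm]
      have := (hN m hm).1
      linarith
  refine ⟨c / 4 ^ (p + 1), by positivity, ?_⟩
  rw [eventually_atTop]
  refine ⟨max (2 * N + 4) 4, fun m hm => ?_⟩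
  have hm4 : 4 ≤ m := le_trans (le_max_right _ _) hm
  have hm2N : 2 * N + 4 ≤ m := le_trans (le_max_left _ _) hm
  have hNm2 : N ≤ m / 2 := by omega
  have hsub : Finset.Ico (m / 2) m ⊆ Finset.Ico N m := by
    apply Finset.Ico_subset_Ico hNm2 le_rfl
  have hterm : ∀ k ∈ Finset.Ico (m / 2) m, c * ((m : ℝ) / 4) ^ p ≤ u k := by
    intro k hk
    rw [Finset.mem_Ico] at hk
    have hkN : N ≤ k := le_trans hNm2 hk.1
    refine le_trans ?_ (hN k hkN).2
    apply mul_le_mul_of_nonneg_left _ hc.le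
    apply Real.rpow_le_rpow (by positivity) _ hp
    have : (m / 2 : ℕ) ≤ k := hk.1
    have h2 : (m : ℝ) / 4 ≤ ((m / 2 : ℕ) : ℝ) := by
      have := Nat.lt_succ_self (m / 2)
      have h3 : m ≤ 2 * (m / 2) + 1 := by omega
      have h4 : (m : ℝ) ≤ 2 * ((m / 2 : ℕ) : ℝ) + 1 := by exact_mod_cast h3
      have h5 : (1 : ℝ) ≤ ((m / 2 : ℕ) : ℝ) := by
        have : 1 ≤ m / 2 := by omega
        exact_mod_cast this
      linarith
    calc (m : ℝ) / 4 ≤ ((m / 2 : ℕ) : ℝ) := h2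
      _ ≤ (k : ℝ) := by exact_mod_cast this
  have hsum : (Finset.Ico (m / 2) m).card • (c * ((m : ℝ) / 4) ^ p)
      ≤ ∑ k ∈ Finset.Ico (m / 2) m, u k := Finset.card_nsmul_le_sum _ _ _ hterm
  have hcard : (Finset.Ico (m / 2) m).card = m - m / 2 := Nat.card_Ico _ _
  have hcard2 : (m : ℝ) / 4 ≤ ((m - m / 2 : ℕ) : ℝ) := by
    have h3 : m / 4 ≥ 1 := by omega
    have : m - m / 2 ≥ m / 2 := by omega
    have h4 : (m : ℝ) / 4 ≤ ((m / 2 : ℕ) : ℝ) := by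
      have h5 : m ≤ 2 * (m / 2) + 1 := by omega
      have h6 : (m : ℝ) ≤ 2 * ((m / 2 : ℕ) : ℝ) + 1 := by exact_mod_cast h5
      have h7 : (1 : ℝ) ≤ ((m / 2 : ℕ) : ℝ) := by
        have : 1 ≤ m / 2 := by omega
        exact_mod_cast this
      linarith
    calc (m : ℝ) / 4 ≤ ((m / 2 : ℕ) : ℝ) := h4
      _ ≤ ((m - m / 2 : ℕ) : ℝ) := by exact_mod_cast this
  have hmain : c / 4 ^ (p + 1) * (m : ℝ) ^ (p + 1) ≤ ∑ k ∈ Finset.Ico (m / 2) m, u k := by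
    refine le_trans ?_ hsum
    rw [hcard, nsmul_eq_mul]
    have hm0 : (0 : ℝ) < m := by positivity
    have e1 : c / 4 ^ (p + 1) * (m : ℝ) ^ (p + 1) = ((m : ℝ) / 4) ^ p * ((m : ℝ) / 4) * c := by
      rw [← Real.rpow_add_one (show (m:ℝ)/4 ≠ 0 by positivity),
        Real.div_rpow (le_of_lt hm0) (by norm_num : (0:ℝ) ≤ 4)]
      ring
    rw [e1]
    have h8 : ((m : ℝ) / 4) ^ p * ((m : ℝ) / 4) * c ≤ ((m : ℝ) / 4) ^ p * ((m - m / 2 : ℕ) : ℝ) * c := by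
      have : (0:ℝ) ≤ ((m : ℝ) / 4) ^ p := by positivity
      nlinarith [mul_le_mul_of_nonneg_left hcard2 (mul_nonneg this hc.le)]
    refine le_trans h8 ?_
    have : (0:ℝ) ≤ ((m - m / 2 : ℕ) : ℝ) := by positivity
    nlinarith [Real.rpow_nonneg (show (0:ℝ) ≤ (m:ℝ)/4 by positivity) p]
  have hsum2 : ∑ k ∈ Finset.Ico (m / 2) m, u k ≤ ∑ k ∈ Finset.Ico N m, u k := by
    apply Finset.sum_le_sum_of_subset_of_nonneg hsub
    intro k hk _
    rw [Finset.mem_Ico] at hk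
    exact le_trans (by positivity) (hN k hk.1).2
  have := key m (by omega)
  have := hv N
  linarith

lemma my_sum_upper {v : ℕ → ℝ} {C q : ℝ}
    (hrec : ∀ᶠ (m : ℕ) in atTop, v (m + 1) ≤ v m + C * (m : ℝ) ^ q) (hC : 0 < C) (hq : 0 ≤ q) :
    ∃ C' > 0, ∀ᶠ (m : ℕ) in atTop, v m ≤ C' * (m : ℝ) ^ (q + 1) := by
  obtain ⟨N, hN⟩ := eventually_atTop.1 hrec
  have key : ∀ m, N ≤ m → v m ≤ v N + ∑ k ∈ Finset.Ico N m, C * (k : ℝ) ^ q := by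
    intro m hm
    induction m, hm using Nat.le_induction with
    | base => simp
    | succ m hm ih =>
      rw [Finset.sum_Ico_succ_top hm]
      have := hN m hm
      linarith
  refine ⟨C + max (v N) 0 + 1, by positivity, ?_⟩
  have hpow : Tendsto (fun m : ℕ => (m : ℝ) ^ (q + 1)) atTop atTop := by
    apply (tendsto_rpow_atTop (by linarith)).comp tendsto_natCast_atTop_atTop
  have hev : ∀ᶠ m : ℕ in atTop, max (v N) 0 ≤ (m : ℝ) ^ (q + 1) := hpow.eventually_ge_atTop _
  filter_upwards [hev, eventually_ge_atTop N, eventually_ge_atTop 1] with m hm1 hm2 hm3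
  have hsumb : ∑ k ∈ Finset.Ico N m, C * (k : ℝ) ^ q ≤ C * (m : ℝ) ^ (q + 1) := by
    have hterm : ∀ k ∈ Finset.Ico N m, C * (k : ℝ) ^ q ≤ C * (m : ℝ) ^ q := by
      intro k hk
      rw [Finset.mem_Ico] at hk
      apply mul_le_mul_of_nonneg_left _ hC.le
      apply Real.rpow_le_rpow (by positivity) (by exact_mod_cast hk.2.le) hq
    calc ∑ k ∈ Finset.Ico N m, C * (k : ℝ) ^ q ≤ (Finset.Ico N m).card • (C * (m : ℝ) ^ q) :=
          Finset.sum_le_card_nsmul _ _ _ hterm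
      _ ≤ m • (C * (m : ℝ) ^ q) := by
          apply nsmul_le_nsmul_left (by positivity)
          rw [Nat.card_Ico]; omega
      _ = (m : ℝ) * (C * (m : ℝ) ^ q) := by rw [nsmul_eq_mul]
      _ = C * (m : ℝ) ^ (q + 1) := by
          rw [Real.rpow_add_one (by positivity : (m:ℝ) ≠ 0)]
          ring
  have h1 : v m ≤ v N + C * (m : ℝ) ^ (q + 1) := le_trans (key m hm2) (by linarith)
  have h2 : v N ≤ max (v N) 0 := le_max_left _ _
  have h3 : (0:ℝ) < (m : ℝ) ^ (q + 1) := by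
    have : (0:ℝ) < (m:ℝ) := by exact_mod_cast hm3
    positivity
  nlinarith [mul_nonneg (le_max_right (v N) (0:ℝ)) h3.le]

lemma my_slope_rpow (p : ℝ) {t : ℕ → ℝ} (ht0 : ∀ᶠ (m : ℕ) in atTop, 0 < t m)
    (ht : Tendsto t atTop (nhds 0)) :
    Tendsto (fun m => ((1 + t m) ^ p - 1) / t m) atTop (nhds p) := by
  have h₁ : HasDerivAt (fun u : ℝ => 1 + u) 1 0 := by
    simpa using (hasDerivAt_id (0:ℝ)).const_add 1
  have h₂ : HasDerivAt (fun x : ℝ => x ^ p) (p * (1:ℝ) ^ (p - 1)) 1 :=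
    Real.hasDerivAt_rpow_const (Or.inl one_ne_zero)
  have h₂' : HasDerivAt (fun x : ℝ => x ^ p) (p * (1:ℝ) ^ (p - 1)) ((fun u : ℝ => 1 + u) 0) := by
    norm_num
    simpa using h₂
  have h₃ : HasDerivAt (fun u : ℝ => (1 + u) ^ p) p 0 := by
    have := h₂'.comp 0 h₁
    simp only [Real.one_rpow, mul_one] at this
    exact this
  have h₄ := hasDerivAt_iff_tendsto_slope.1 h₃
  have h₅ : Tendsto t atTop (nhdsWithin 0 {(0:ℝ)}ᶜ) := by
    rw [tendsto_nhdsWithin_iff]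
    exact ⟨ht, ht0.mono fun m hm => ne_of_gt hm⟩
  have h₆ := h₄.comp h₅
  apply h₆.congr
  intro m
  simp [slope, Function.comp, div_eq_inv_mul]


lemma my_stolz {x y : ℕ → ℝ} {l : ℝ}
    (hmono : ∀ᶠ m in atTop, y m < y (m + 1))
    (hy : Tendsto y atTop atTop)
    (h : Tendsto (fun m => (x (m + 1) - x m) / (y (m + 1) - y m)) atTop (nhds l)) :
    Tendsto (fun m => x m / y m) atTop (nhds l) := by
  rw [Metric.tendsto_atTop] at h ⊢
  intro ε hε
  obtain ⟨N₁, hN₁⟩ := h (ε / 2) (by linarith)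
  obtain ⟨N₂, hN₂⟩ := eventually_atTop.1 hmono
  set N := max N₁ N₂ with hN
  -- telescoping estimate
  have key : ∀ m, N ≤ m → |x m - x N - l * (y m - y N)| ≤ ε / 2 * (y m - y N) ∧ y N ≤ y m := by
    intro m hm
    induction m, hm using Nat.le_induction with
    | base => simp
    | succ m hm ih =>
      have hmN₂ : N₂ ≤ m := le_trans (le_max_right _ _) hm
      have hmN₁ : N₁ ≤ m := le_trans (le_max_left _ _) hm
      have hΔ : 0 < y (m + 1) - y m := sub_pos.2 (hN₂ m hmN₂)
      have hd := hN₁ m hmN₁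
      rw [Real.dist_eq] at hd
      have h2 : |x (m + 1) - x m - l * (y (m + 1) - y m)| ≤ ε / 2 * (y (m + 1) - y m) := by
        have heq : (x (m + 1) - x m) / (y (m + 1) - y m) - l
            = (x (m + 1) - x m - l * (y (m + 1) - y m)) / (y (m + 1) - y m) := by
          field_simp
        rw [heq, abs_div, abs_of_pos hΔ, div_lt_iff₀ hΔ] at hd
        nlinarith
      constructor
      · calc |x (m + 1) - x N - l * (y (m + 1) - y N)|
            ≤ |x m - x N - l * (y m - y N)| + |x (m + 1) - x m - l * (y (m + 1) - y m)| := by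
              have : x (m + 1) - x N - l * (y (m + 1) - y N)
                  = (x m - x N - l * (y m - y N)) + (x (m + 1) - x m - l * (y (m + 1) - y m)) := by
                ring
              rw [this]; exact abs_add_le _ _
        _ ≤ ε / 2 * (y m - y N) + ε / 2 * (y (m + 1) - y m) := add_le_add ih.1 h2
        _ = ε / 2 * (y (m + 1) - y N) := by ring
      · linarith [ih.2]
  set C := |x N - l * y N| + ε / 2 * |y N| with hC
  have hC0 : 0 ≤ C := by positivity
  have hyBig : ∀ᶠ m in atTop, max 1 (2 * C / ε + 1) ≤ y m := hy.eventually_ge_atTop _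
  obtain ⟨N₃, hN₃⟩ := eventually_atTop.1 hyBig
  refine ⟨max N N₃, fun m hm => ?_⟩
  have hmN : N ≤ m := le_trans (le_max_left _ _) hm
  have hym := hN₃ m (le_trans (le_max_right _ _) hm)
  have hy1 : (1 : ℝ) ≤ y m := le_trans (le_max_left _ _) hym
  have hy0 : 0 < y m := lt_of_lt_of_le one_pos hy1
  have hyC : 2 * C / ε + 1 ≤ y m := le_trans (le_max_right _ _) hym
  obtain ⟨hkey, hyN⟩ := key m hmN
  have hbound : |x m - l * y m| ≤ ε / 2 * y m + C := by
    have h1 : |x m - l * y m| ≤ |x m - x N - l * (y m - y N)| + |x N - l * y N| := by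
      have : x m - l * y m = (x m - x N - l * (y m - y N)) + (x N - l * y N) := by ring
      rw [this]; exact abs_add_le _ _
    have h2 : ε / 2 * (y m - y N) ≤ ε / 2 * y m + ε / 2 * |y N| := by
      have := neg_abs_le (y N); nlinarith
    calc |x m - l * y m| ≤ ε / 2 * (y m - y N) + |x N - l * y N| := by linarith
      _ ≤ ε / 2 * y m + C := by rw [hC]; linarith
  rw [Real.dist_eq]
  have heq : x m / y m - l = (x m - l * y m) / y m := by
    field_simp
  rw [heq, abs_div, abs_of_pos hy0, div_lt_iff₀ hy0]
  have hCym : C < ε / 2 * y m := by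
    have h3 : ε / 2 * (2 * C / ε) = C := by
      field_simp
    nlinarith
  nlinarith



theorem growth_of_recursive_sequence (f : ℕ → ℕ) (a α : ℝ) (ha : 0 < a)
    (hα0 : 0 < α) (hα1 : α < 1)
    (hf : Tendsto (fun n : ℕ => (f n : ℝ) / (n : ℝ) ^ α) atTop (nhds a))
    (s : ℕ → ℕ) (hs1 : s 1 = 1)
    (hsrec : ∀ m ≥ 1, s (m + 1) = s m + f (∑ i ∈ Finset.Icc 1 m, s i)) :
    Tendsto (fun m : ℕ => (s m : ℝ) / (m : ℝ) ^ ((1 + α) / (1 - α))) atTop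
      (nhds ((a * (1 - α) ^ (1 + α) / (2 ^ α * (1 + α))) ^ (1 / (1 - α)))) := by
  have h1α : (0:ℝ) < 1 - α := by linarith
  have h1α' : (0:ℝ) < 1 + α := by linarith
  set γ : ℝ := (1 + α) / (1 - α) with hγdef
  have hγ0 : 0 < γ := by positivity
  have hγ1 : 1 < γ := by
    rw [hγdef, lt_div_iff₀ h1α]; linarith
  set S : ℕ → ℕ := fun m => ∑ i ∈ Finset.Icc 1 m, s i with hSdef
  -- basic facts
  have hs_ge1 : ∀ m, 1 ≤ m → 1 ≤ s m := by
    intro m hm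
    induction m, hm using Nat.le_induction with
    | base => omega
    | succ m hm ih => rw [hsrec m hm]; omega
  have hs_mono : ∀ i j, 1 ≤ i → i ≤ j → s i ≤ s j := by
    intro i j hi hij
    induction j, hij using Nat.le_induction with
    | base => exact le_refl _
    | succ j hj ih => rw [hsrec j (le_trans hi hj)]; omega
  have hS_succ : ∀ m, S (m + 1) = S m + s (m + 1) := by
    intro m
    rw [hSdef]
    exact Finset.sum_Icc_succ_top (by omega) s
  have hS_ge : ∀ m, m ≤ S m := by
    intro m
    have : ∑ i ∈ Finset.Icc 1 m, 1 ≤ S m :=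
      Finset.sum_le_sum fun i hi => hs_ge1 i (Finset.mem_Icc.1 hi).1
    simpa [Nat.card_Icc] using this
  have hS_le : ∀ m, 1 ≤ m → S m ≤ m * s m := by
    intro m hm
    have : S m ≤ ∑ i ∈ Finset.Icc 1 m, s m :=
      Finset.sum_le_sum fun i hi => hs_mono i m (Finset.mem_Icc.1 hi).1 (Finset.mem_Icc.1 hi).2
    simpa [Nat.card_Icc, mul_comm] using this
  have hS_lt : ∀ m, S m < S (m + 1) := by
    intro m
    rw [hS_succ m]
    have := hs_ge1 (m + 1) (by omega)
    omega
  have hS_tend : Tendsto S atTop atTop :=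
    tendsto_atTop_mono hS_ge tendsto_id
  have hSR_tend : Tendsto (fun m => ((S m : ℕ) : ℝ)) atTop atTop :=
    tendsto_natCast_atTop_atTop.comp hS_tend
  have hfS : Tendsto (fun m => (f (S m) : ℝ) / ((S m : ℕ) : ℝ) ^ α) atTop (nhds a) :=
    hf.comp hS_tend
  -- bounds on f
  have hfb : ∀ᶠ (n : ℕ) in atTop, a / 2 * (n : ℝ) ^ α ≤ (f n : ℝ) ∧ (f n : ℝ) ≤ 2 * a * (n : ℝ) ^ α := by
    obtain ⟨N, hN⟩ := Metric.tendsto_atTop.1 hf (a / 2) (by linarith)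
    rw [eventually_atTop]
    refine ⟨max N 1, fun n hn => ?_⟩
    have hn1 : 1 ≤ n := le_trans (le_max_right _ _) hn
    have hd := hN n (le_trans (le_max_left _ _) hn)
    rw [Real.dist_eq, abs_lt] at hd
    have hnp : (0:ℝ) < (n : ℝ) ^ α := by
      have : (0:ℝ) < (n : ℝ) := by exact_mod_cast hn1
      positivity
    have hfeq : (f n : ℝ) = ((f n : ℝ) / (n : ℝ) ^ α) * (n : ℝ) ^ α := by field_simp
    constructor
    · have h3 : a / 2 < (f n : ℝ) / (n : ℝ) ^ α := by linarith [hd.1]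
      rw [hfeq]; nlinarith
    · have h3 : (f n : ℝ) / (n : ℝ) ^ α < 2 * a := by linarith [hd.2]
      rw [hfeq]; nlinarith
  have hfSb : ∀ᶠ (m : ℕ) in atTop,
      a / 2 * ((S m : ℕ) : ℝ) ^ α ≤ (f (S m) : ℝ) ∧ (f (S m) : ℝ) ≤ 2 * a * ((S m : ℕ) : ℝ) ^ α :=
    hS_tend.eventually hfb
  -- cast recursion
  have hrecR : ∀ᶠ (m : ℕ) in atTop, (s (m + 1) : ℝ) = (s m : ℝ) + (f (S m) : ℝ) := by
    filter_upwards [eventually_ge_atTop 1] with m hm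
    rw [hsrec m hm]; push_cast; ring
  -- upper bound for s
  have hs_up : ∃ C > 0, ∀ᶠ (m : ℕ) in atTop, (s m : ℝ) ≤ C * (m : ℝ) ^ γ := by
    set w : ℕ → ℝ := fun m => (s m : ℝ) ^ (1 - α) with hwdef
    have hwrec : ∀ᶠ (m : ℕ) in atTop, w (m + 1) ≤ w m + 2 * a * (1 - α) * (m : ℝ) ^ α := by
      filter_upwards [hrecR, hfSb, eventually_ge_atTop 1] with m hrec hfbm hm
      have hx1 : (1:ℝ) ≤ (s m : ℝ) := by exact_mod_cast hs_ge1 m hm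
      have hx0 : (0:ℝ) < (s m : ℝ) := lt_of_lt_of_le one_pos hx1
      have hy0 : (0:ℝ) ≤ (f (S m) : ℝ) := by positivity
      have hm0 : (0:ℝ) < (m : ℝ) := by exact_mod_cast hm
      have e2 : (s m : ℝ) + (f (S m) : ℝ) = (s m : ℝ) * (1 + (f (S m) : ℝ) / (s m : ℝ)) := by
        field_simp
      have e3 : ((s m : ℝ) + (f (S m) : ℝ)) ^ (1 - α)
          = (s m : ℝ) ^ (1 - α) * (1 + (f (S m) : ℝ) / (s m : ℝ)) ^ (1 - α) := by
        rw [e2, Real.mul_rpow hx0.le (by positivity)]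
      have e4 : (1 + (f (S m) : ℝ) / (s m : ℝ)) ^ (1 - α)
          ≤ 1 + (1 - α) * ((f (S m) : ℝ) / (s m : ℝ)) :=
        rpow_one_add_le_one_add_mul_self
          (le_trans (by norm_num : (-1:ℝ) ≤ 0) (by positivity)) (by linarith) (by linarith)
      have e5 : (s m : ℝ) ^ (1 - α) / (s m : ℝ) = (s m : ℝ) ^ (-α) := by
        have h5 : (s m : ℝ) ^ (1 - α) / (s m : ℝ) ^ (1:ℝ) = (s m : ℝ) ^ (1 - α - 1) :=
          (Real.rpow_sub hx0 _ _).symm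
        rw [Real.rpow_one] at h5
        rw [h5]
        norm_num
      have e6 : ((S m : ℕ) : ℝ) ≤ (m : ℝ) * (s m : ℝ) := by exact_mod_cast hS_le m hm
      have e7 : ((S m : ℕ) : ℝ) ^ α ≤ (m : ℝ) ^ α * (s m : ℝ) ^ α := by
        rw [← Real.mul_rpow hm0.le hx0.le]
        exact Real.rpow_le_rpow (by positivity) e6 hα0.le
      have e8 : (s m : ℝ) ^ (-α) * (s m : ℝ) ^ α = 1 := by
        rw [← Real.rpow_add hx0]; norm_num
      have hxa : (0:ℝ) < (s m : ℝ) ^ (-α) := Real.rpow_pos_of_pos hx0 _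
      have hxna : (0:ℝ) ≤ (s m : ℝ) ^ (1 - α) := Real.rpow_nonneg hx0.le _
      have hw1 : w (m + 1) = ((s m : ℝ) + (f (S m) : ℝ)) ^ (1 - α) := by
        simp only [hwdef]
        rw [hrec]
      have hma : (0:ℝ) ≤ (m : ℝ) ^ α := Real.rpow_nonneg hm0.le _
      have hww : w m = (s m : ℝ) ^ (1 - α) := rfl
      calc w (m + 1) = (s m : ℝ) ^ (1 - α) * (1 + (f (S m) : ℝ) / (s m : ℝ)) ^ (1 - α) := by
            rw [hw1, e3]
        _ ≤ (s m : ℝ) ^ (1 - α) * (1 + (1 - α) * ((f (S m) : ℝ) / (s m : ℝ))) :=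
            mul_le_mul_of_nonneg_left e4 hxna
        _ = w m + (1 - α) * (s m : ℝ) ^ (-α) * (f (S m) : ℝ) := by
            rw [hww, ← e5]
            field_simp
        _ ≤ w m + (1 - α) * (s m : ℝ) ^ (-α) * (2 * a * ((m : ℝ) ^ α * (s m : ℝ) ^ α)) := by
            have h9 : (f (S m) : ℝ) ≤ 2 * a * ((m : ℝ) ^ α * (s m : ℝ) ^ α) := by
              refine le_trans hfbm.2 ?_
              nlinarith
            nlinarith [mul_le_mul_of_nonneg_left h9
              (mul_nonneg (by linarith : (0:ℝ) ≤ 1 - α) hxa.le)]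
        _ = w m + 2 * a * (1 - α) * (m : ℝ) ^ α := by
            have h10 : (1 - α) * (s m : ℝ) ^ (-α) * (2 * a * ((m : ℝ) ^ α * (s m : ℝ) ^ α))
                = 2 * a * (1 - α) * (m : ℝ) ^ α * ((s m : ℝ) ^ (-α) * (s m : ℝ) ^ α) := by ring
            rw [h10, e8, mul_one]
    obtain ⟨C₂, hC₂, hup⟩ := my_sum_upper hwrec (by positivity) hα0.le
    refine ⟨C₂ ^ (1 - α)⁻¹, by positivity, ?_⟩
    filter_upwards [hup, eventually_ge_atTop 1] with m hupm hm
    have hx1 : (1:ℝ) ≤ (s m : ℝ) := by exact_mod_cast hs_ge1 m hm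
    have hx0 : (0:ℝ) < (s m : ℝ) := lt_of_lt_of_le one_pos hx1
    have hm0 : (0:ℝ) < (m : ℝ) := by exact_mod_cast hm
    have e9 : (s m : ℝ) = (w m) ^ (1 - α)⁻¹ := by
      rw [hwdef, ← Real.rpow_mul hx0.le, mul_inv_cancel₀ h1α.ne', Real.rpow_one]
    rw [e9]
    calc (w m) ^ (1 - α)⁻¹ ≤ (C₂ * (m : ℝ) ^ (α + 1)) ^ (1 - α)⁻¹ := by
          apply Real.rpow_le_rpow (Real.rpow_nonneg hx0.le _) hupm (by positivity)
      _ = C₂ ^ (1 - α)⁻¹ * (m : ℝ) ^ γ := by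
          rw [Real.mul_rpow hC₂.le (Real.rpow_nonneg hm0.le _), ← Real.rpow_mul hm0.le]
          congr 1
          rw [hγdef]
          field_simp
          ring
  obtain ⟨C₁, hC₁, hs_up⟩ := hs_up
  -- upper bound for S
  have hS_up : ∀ᶠ (m : ℕ) in atTop, ((S m : ℕ) : ℝ) ≤ C₁ * (m : ℝ) ^ (γ + 1) := by
    filter_upwards [hs_up, eventually_ge_atTop 1] with m hsu hm
    have hm0 : (0:ℝ) < (m : ℝ) := by exact_mod_cast hm
    have e6 : ((S m : ℕ) : ℝ) ≤ (m : ℝ) * (s m : ℝ) := by exact_mod_cast hS_le m hm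
    calc ((S m : ℕ) : ℝ) ≤ (m : ℝ) * (s m : ℝ) := e6
      _ ≤ (m : ℝ) * (C₁ * (m : ℝ) ^ γ) := by nlinarith
      _ = C₁ * (m : ℝ) ^ (γ + 1) := by rw [Real.rpow_add_one hm0.ne']; ring
  -- lower bounds via bootstrap
  have sfromS : ∀ b c : ℝ, 0 ≤ b → 0 < c →
      (∀ᶠ (m : ℕ) in atTop, c * (m : ℝ) ^ b ≤ ((S m : ℕ) : ℝ)) →
      ∃ c₂ > 0, ∀ᶠ (m : ℕ) in atTop, c₂ * (m : ℝ) ^ (α * b + 1) ≤ (s m : ℝ) := by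
    intro b c hb hc hSb
    have hu : ∀ᶠ (m : ℕ) in atTop, (a / 2 * c ^ α) * (m : ℝ) ^ (α * b) ≤ (f (S m) : ℝ) := by
      filter_upwards [hfSb, hSb, eventually_ge_atTop 1] with m hfbm hSbm hm
      have hm0 : (0:ℝ) < (m : ℝ) := by exact_mod_cast hm
      have h2 : (0:ℝ) ≤ c * (m : ℝ) ^ b := by positivity
      have h3 : (c * (m : ℝ) ^ b) ^ α ≤ ((S m : ℕ) : ℝ) ^ α :=
        Real.rpow_le_rpow h2 hSbm hα0.le
      have h4 : (c * (m : ℝ) ^ b) ^ α = c ^ α * (m : ℝ) ^ (α * b) := by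
        rw [Real.mul_rpow hc.le (Real.rpow_nonneg hm0.le _), ← Real.rpow_mul hm0.le, mul_comm b α]
      calc (a / 2 * c ^ α) * (m : ℝ) ^ (α * b) = a / 2 * ((c * (m : ℝ) ^ b) ^ α) := by
            rw [h4]; ring
        _ ≤ a / 2 * ((S m : ℕ) : ℝ) ^ α := mul_le_mul_of_nonneg_left h3 (by linarith)
        _ ≤ (f (S m) : ℝ) := hfbm.1
    have hrec2 : ∀ᶠ (m : ℕ) in atTop, (s m : ℝ) + (f (S m) : ℝ) ≤ (s (m + 1) : ℝ) := by
      filter_upwards [hrecR] with m h; rw [h]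
    exact my_sum_lower (fun m => by positivity) hrec2 (by positivity) (by positivity) hu
  have SfromS : ∀ b c : ℝ, 0 ≤ b → 0 < c →
      (∀ᶠ (m : ℕ) in atTop, c * (m : ℝ) ^ b ≤ ((S m : ℕ) : ℝ)) →
      ∃ c₃ > 0, ∀ᶠ (m : ℕ) in atTop, c₃ * (m : ℝ) ^ (α * b + 2) ≤ ((S m : ℕ) : ℝ) := by
    intro b c hb hc hSb
    obtain ⟨c₂, hc₂, hs2⟩ := sfromS b c hb hc hSb
    have hu : ∀ᶠ (m : ℕ) in atTop, c₂ * (m : ℝ) ^ (α * b + 1) ≤ (s (m + 1) : ℝ) := by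
      have hshift := (tendsto_add_atTop_nat 1).eventually hs2
      filter_upwards [hshift, eventually_ge_atTop 1] with m hsm hm
      refine le_trans ?_ hsm
      apply mul_le_mul_of_nonneg_left _ hc₂.le
      apply Real.rpow_le_rpow (by positivity) (by push_cast; linarith) (by positivity)
    have hrec2 : ∀ᶠ (m : ℕ) in atTop,
        ((S m : ℕ) : ℝ) + (s (m + 1) : ℝ) ≤ ((S (m + 1) : ℕ) : ℝ) := by
      apply Eventually.of_forall
      intro m
      exact le_of_eq (by exact_mod_cast (hS_succ m).symm)
    obtain ⟨c₃, hc₃, h⟩ :=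
      my_sum_lower (v := fun m => ((S m : ℕ) : ℝ)) (fun m => by positivity) hrec2 hc₂
        (by positivity) hu
    refine ⟨c₃, hc₃, ?_⟩
    have he : α * b + 1 + 1 = α * b + 2 := by ring
    rw [he] at h
    exact h
  have hβ : ∀ k : ℕ, (1:ℝ) ≤ 2 / (1 - α) - γ * α ^ k := by
    intro k
    have h1 : α ^ k ≤ 1 := pow_le_one₀ hα0.le hα1.le
    have h2 : 0 < α ^ k := pow_pos hα0 k
    have h3 : 2 / (1 - α) - 1 = γ := by rw [hγdef]; field_simp; ring
    nlinarith
  have boot : ∀ k : ℕ, ∃ c > 0, ∀ᶠ (m : ℕ) in atTop,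
      c * (m : ℝ) ^ (2 / (1 - α) - γ * α ^ k) ≤ ((S m : ℕ) : ℝ) := by
    intro k
    induction k with
    | zero =>
      refine ⟨1, one_pos, Eventually.of_forall fun m => ?_⟩
      have he : 2 / (1 - α) - γ * α ^ 0 = 1 := by
        rw [pow_zero, mul_one, hγdef]; field_simp; ring
      rw [he, Real.rpow_one, one_mul]
      exact_mod_cast hS_ge m
    | succ k ih =>
      obtain ⟨c, hc, hSk⟩ := ih
      have hb1 : (1:ℝ) ≤ 2 / (1 - α) - γ * α ^ k := hβ k
      obtain ⟨c₃, hc₃, h⟩ := SfromS _ c (by linarith) hc hSk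
      refine ⟨c₃, hc₃, ?_⟩
      have he : α * (2 / (1 - α) - γ * α ^ k) + 2 = 2 / (1 - α) - γ * α ^ (k + 1) := by
        rw [hγdef]; field_simp; ring
      rw [he] at h
      exact h
  have hlow : ∃ ε : ℝ, 0 < ε ∧ ε < 1 / 2 ∧
      (∃ c > 0, ∀ᶠ (m : ℕ) in atTop, c * (m : ℝ) ^ (γ + 1 - ε) ≤ ((S m : ℕ) : ℝ)) ∧
      (∃ c > 0, ∀ᶠ (m : ℕ) in atTop, c * (m : ℝ) ^ (γ - ε) ≤ (s m : ℝ)) := by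
    have hak : Tendsto (fun k : ℕ => γ * α ^ k) atTop (nhds 0) := by
      have h := tendsto_pow_atTop_nhds_zero_of_lt_one hα0.le hα1
      have h2 := h.const_mul γ
      simpa using h2
    have hev : ∀ᶠ k in atTop, γ * α ^ k < 1 / 2 := hak.eventually_lt_const (by norm_num)
    obtain ⟨k, hk⟩ := hev.exists
    refine ⟨γ * α ^ k, mul_pos hγ0 (pow_pos hα0 k), hk, ?_, ?_⟩
    · obtain ⟨c, hc, h⟩ := boot k
      refine ⟨c, hc, ?_⟩
      have he : γ + 1 - γ * α ^ k = 2 / (1 - α) - γ * α ^ k := by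
        rw [hγdef]; field_simp; ring
      rw [he]
      exact h
    · obtain ⟨c, hc, h⟩ := boot k
      obtain ⟨c₂, hc₂, h₂⟩ := sfromS _ c (by linarith [hβ k]) hc h
      refine ⟨c₂, hc₂, ?_⟩
      filter_upwards [h₂, eventually_ge_atTop 1] with m hm2 hm1
      refine le_trans ?_ hm2
      apply mul_le_mul_of_nonneg_left _ hc₂.le
      apply Real.rpow_le_rpow_of_exponent_le (by exact_mod_cast hm1)
      have hak0 : (0:ℝ) < α ^ k := pow_pos hα0 k
      have he2 : α * (2 / (1 - α) - γ * α ^ k) + 1 = γ - α * (γ * α ^ k) := by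
        rw [hγdef]; field_simp; ring
      rw [he2]
      nlinarith [mul_pos h1α (mul_pos hγ0 (pow_pos hα0 k))]
  obtain ⟨ε, hε0, hε12, ⟨cS, hcS, hSlow⟩, ⟨cs, hcs, hslow⟩⟩ := hlow
  -- s(m+1)/S m → 0
  have hrneg : Tendsto (fun m : ℕ => (m : ℝ) ^ (ε - 1)) atTop (nhds 0) := by
    have h := (tendsto_rpow_neg_atTop (by linarith : (0:ℝ) < 1 - ε)).comp
      tendsto_natCast_atTop_atTop
    have he : ∀ m : ℕ, (m : ℝ) ^ (-(1 - ε)) = (m : ℝ) ^ (ε - 1) := by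
      intro m; congr 1; ring
    exact h.congr fun m => he m
  have h0 : Tendsto (fun m => (s (m + 1) : ℝ) / ((S m : ℕ) : ℝ)) atTop (nhds 0) := by
    have hg : Tendsto (fun m : ℕ => (C₁ * 2 ^ γ / cS) * (m : ℝ) ^ (ε - 1)) atTop (nhds 0) := by
      simpa using hrneg.const_mul (C₁ * 2 ^ γ / cS)
    apply squeeze_zero' (Eventually.of_forall fun m => div_nonneg (by positivity) (by positivity))
      ?_ hg
    have hshift := (tendsto_add_atTop_nat 1).eventually hs_up
    filter_upwards [hshift, hSlow, eventually_ge_atTop 1] with m hup hlo hm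
    have hm0 : (0:ℝ) < (m : ℝ) := by exact_mod_cast hm
    have h2 : (s (m + 1) : ℝ) ≤ C₁ * 2 ^ γ * (m : ℝ) ^ γ := by
      refine le_trans hup ?_
      have hm1 : (1:ℝ) ≤ (m : ℝ) := by exact_mod_cast hm
      have h3 : ((m + 1 : ℕ) : ℝ) ^ γ ≤ (2 * (m : ℝ)) ^ γ := by
        apply Real.rpow_le_rpow (by positivity) (by push_cast; linarith) hγ0.le
      have h4 : (2 * (m : ℝ)) ^ γ = 2 ^ γ * (m : ℝ) ^ γ :=
        Real.mul_rpow (by norm_num) hm0.le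
      calc C₁ * ((m + 1 : ℕ) : ℝ) ^ γ ≤ C₁ * (2 * (m : ℝ)) ^ γ :=
            mul_le_mul_of_nonneg_left h3 hC₁.le
        _ = C₁ * 2 ^ γ * (m : ℝ) ^ γ := by rw [h4]; ring
    have h5 : (0:ℝ) < cS * (m : ℝ) ^ (γ + 1 - ε) := by positivity
    calc (s (m + 1) : ℝ) / ((S m : ℕ) : ℝ)
        ≤ (C₁ * 2 ^ γ * (m : ℝ) ^ γ) / (cS * (m : ℝ) ^ (γ + 1 - ε)) :=
          div_le_div₀ (by positivity) h2 h5 hlo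
      _ = (C₁ * 2 ^ γ / cS) * ((m : ℝ) ^ γ / (m : ℝ) ^ (γ + 1 - ε)) :=
          mul_div_mul_comm _ _ _ _
      _ = (C₁ * 2 ^ γ / cS) * (m : ℝ) ^ (ε - 1) := by
          rw [← Real.rpow_sub hm0]
          congr 1
          ring
  -- f(S m)/s m → 0
  have h1 : Tendsto (fun m => (f (S m) : ℝ) / (s m : ℝ)) atTop (nhds 0) := by
    have hg : Tendsto (fun m : ℕ => (2 * a * C₁ ^ α / cs) * (m : ℝ) ^ (ε - 1)) atTop (nhds 0) := by
      simpa using hrneg.const_mul (2 * a * C₁ ^ α / cs)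
    apply squeeze_zero' (Eventually.of_forall fun m => div_nonneg (by positivity) (by positivity))
      ?_ hg
    filter_upwards [hfSb, hS_up, hslow, eventually_ge_atTop 1] with m hfbm hSup hlo hm
    have hm0 : (0:ℝ) < (m : ℝ) := by exact_mod_cast hm
    have h2 : (f (S m) : ℝ) ≤ 2 * a * C₁ ^ α * (m : ℝ) ^ (α * (γ + 1)) := by
      refine le_trans hfbm.2 ?_
      have h3 : ((S m : ℕ) : ℝ) ^ α ≤ (C₁ * (m : ℝ) ^ (γ + 1)) ^ α :=
        Real.rpow_le_rpow (by positivity) hSup hα0.le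
      have h4 : (C₁ * (m : ℝ) ^ (γ + 1)) ^ α = C₁ ^ α * (m : ℝ) ^ ((γ + 1) * α) := by
        rw [Real.mul_rpow hC₁.le (Real.rpow_nonneg hm0.le _), ← Real.rpow_mul hm0.le]
      calc 2 * a * ((S m : ℕ) : ℝ) ^ α ≤ 2 * a * (C₁ * (m : ℝ) ^ (γ + 1)) ^ α := by nlinarith
        _ = 2 * a * C₁ ^ α * (m : ℝ) ^ (α * (γ + 1)) := by rw [h4, mul_comm (γ+1) α]; ring
    have h5 : (0:ℝ) < cs * (m : ℝ) ^ (γ - ε) := by positivity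
    calc (f (S m) : ℝ) / (s m : ℝ)
        ≤ (2 * a * C₁ ^ α * (m : ℝ) ^ (α * (γ + 1))) / (cs * (m : ℝ) ^ (γ - ε)) :=
          div_le_div₀ (by positivity) h2 h5 hlo
      _ = (2 * a * C₁ ^ α / cs) * ((m : ℝ) ^ (α * (γ + 1)) / (m : ℝ) ^ (γ - ε)) :=
          mul_div_mul_comm _ _ _ _
      _ = (2 * a * C₁ ^ α / cs) * (m : ℝ) ^ (ε - 1) := by
          have hexp : α * (γ + 1) - (γ - ε) = ε - 1 := by rw [hγdef]; field_simp; ring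
          rw [← Real.rpow_sub hm0, hexp]
  set L : ℝ := 2 * a / (1 + α) with hLdef
  have hL0 : 0 < L := by positivity
  set t : ℕ → ℝ := fun m => (s (m + 1) : ℝ) / ((S m : ℕ) : ℝ) with htdef
  have ht0 : ∀ᶠ (m : ℕ) in atTop, 0 < t m := by
    filter_upwards [eventually_ge_atTop 1] with m hm
    have h1 : (0:ℝ) < (s (m+1) : ℝ) := by exact_mod_cast hs_ge1 (m+1) (by omega)
    have h2 : (0:ℝ) < ((S m : ℕ) : ℝ) := by
      have := hS_ge m
      have : 1 ≤ S m := le_trans hm this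
      exact_mod_cast lt_of_lt_of_le one_pos (by exact_mod_cast this)
    exact div_pos h1 h2
  -- Step A : s m ^ 2 / S m ^ (1+α) → L
  have hA : Tendsto (fun m => ((s m : ℝ)) ^ 2 / ((S m : ℕ) : ℝ) ^ (1 + α)) atTop (nhds L) := by
    refine my_stolz (x := fun m => ((s m : ℝ)) ^ 2) (y := fun m => ((S m : ℕ) : ℝ) ^ (1 + α))
      ?_ ?_ ?_
    · apply Eventually.of_forall
      intro m
      apply Real.rpow_lt_rpow (by positivity) _ h1α'
      exact_mod_cast hS_lt m
    · exact (tendsto_rpow_atTop h1α').comp hSR_tend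
    · have hQ := my_slope_rpow (1 + α) ht0 h0
      have hQinv : Tendsto (fun m => (((1 + t m) ^ (1 + α) - 1) / t m)⁻¹) atTop
          (nhds (1 + α)⁻¹) := hQ.inv₀ (by positivity)
      have hfrac : Tendsto (fun m => (2 * (s m : ℝ) + (f (S m) : ℝ)) / (s (m + 1) : ℝ)) atTop
          (nhds 2) := by
        have hnum : Tendsto (fun m => 2 + (f (S m) : ℝ) / (s m : ℝ)) atTop (nhds 2) := by
          simpa using (tendsto_const_nhds (x := (2:ℝ)) (f := atTop (α := ℕ))).add h1
        have hden : Tendsto (fun m => 1 + (f (S m) : ℝ) / (s m : ℝ)) atTop (nhds 1) := by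
          simpa using (tendsto_const_nhds (x := (1:ℝ)) (f := atTop (α := ℕ))).add h1
        have h2 := hnum.div hden one_ne_zero
        norm_num at h2
        apply h2.congr'
        filter_upwards [hrecR, eventually_ge_atTop 1] with m hrec hm
        have hx0 : (0:ℝ) < (s m : ℝ) := by
          have := hs_ge1 m hm
          exact_mod_cast lt_of_lt_of_le one_pos (by exact_mod_cast this)
        have hy0 : (0:ℝ) ≤ (f (S m) : ℝ) := by positivity
        have hsf : (s m : ℝ) + (f (S m) : ℝ) ≠ 0 := by positivity
        rw [hrec, Pi.div_apply]
        field_simp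
      have hprod := (hfS.mul hfrac).mul hQinv
      have hval : a * 2 * (1 + α)⁻¹ = L := by
        rw [hLdef, div_eq_mul_inv]; ring
      rw [hval] at hprod
      apply hprod.congr'
      filter_upwards [hrecR, ht0, eventually_ge_atTop 1] with m hrec htm hm
      have hx0 : (0:ℝ) < (s m : ℝ) := by
        have := hs_ge1 m hm
        exact_mod_cast lt_of_lt_of_le one_pos (by exact_mod_cast this)
      have hs'0 : (0:ℝ) < (s (m + 1) : ℝ) := by
        have := hs_ge1 (m + 1) (by omega)
        exact_mod_cast lt_of_lt_of_le one_pos (by exact_mod_cast this)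
      have hS0 : (0:ℝ) < ((S m : ℕ) : ℝ) := by
        have := le_trans hm (hS_ge m)
        exact_mod_cast lt_of_lt_of_le one_pos (by exact_mod_cast this)
      have hSa : (0:ℝ) < ((S m : ℕ) : ℝ) ^ α := Real.rpow_pos_of_pos hS0 _
      have hQpos : (0:ℝ) < ((1 + t m) ^ (1 + α) - 1) / t m := by
        apply div_pos _ htm
        have h9 : (1:ℝ) < (1 + t m) ^ (1 + α) := by
          calc (1:ℝ) = 1 ^ (1 + α) := (Real.one_rpow _).symm
            _ < (1 + t m) ^ (1 + α) := Real.rpow_lt_rpow (by norm_num) (by linarith) h1α'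
        linarith
      have hnum : ((s (m + 1) : ℝ)) ^ 2 - ((s m : ℝ)) ^ 2
          = (f (S m) : ℝ) * (2 * (s m : ℝ) + (f (S m) : ℝ)) := by
        rw [hrec]; ring
      have hcast : ((S (m + 1) : ℕ) : ℝ) = ((S m : ℕ) : ℝ) + (s (m + 1) : ℝ) := by
        exact_mod_cast hS_succ m
      have htm_eq : (s (m + 1) : ℝ) = ((S m : ℕ) : ℝ) * t m := by
        rw [htdef]
        field_simp
      have hden : ((S (m + 1) : ℕ) : ℝ) ^ (1 + α) - ((S m : ℕ) : ℝ) ^ (1 + α)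
          = ((S m : ℕ) : ℝ) ^ α * (s (m + 1) : ℝ) * (((1 + t m) ^ (1 + α) - 1) / t m) := by
        have e1 : ((S (m + 1) : ℕ) : ℝ) = ((S m : ℕ) : ℝ) * (1 + t m) := by
          rw [hcast, htm_eq]; ring
        have e2 : ((S (m + 1) : ℕ) : ℝ) ^ (1 + α)
            = ((S m : ℕ) : ℝ) ^ (1 + α) * (1 + t m) ^ (1 + α) := by
          rw [e1, Real.mul_rpow hS0.le (by linarith)]
        have e3 : ((S m : ℕ) : ℝ) ^ (1 + α) = ((S m : ℕ) : ℝ) ^ α * ((S m : ℕ) : ℝ) := by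
          rw [show (1 + α) = α + 1 by ring, Real.rpow_add_one hS0.ne']
        rw [e2, e3, htm_eq]
        field_simp
      rw [hnum, hden]
      field_simp
  -- Step B : s m / S m ^ ((1+α)/2) → √L
  have hB : Tendsto (fun m => (s m : ℝ) / ((S m : ℕ) : ℝ) ^ ((1 + α) / 2)) atTop
      (nhds (Real.sqrt L)) := by
    have hsq : Tendsto (fun m => Real.sqrt (((s m : ℝ)) ^ 2 / ((S m : ℕ) : ℝ) ^ (1 + α))) atTop
        (nhds (Real.sqrt L)) := (Real.continuous_sqrt.tendsto L).comp hA
    apply hsq.congr'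
    filter_upwards [eventually_ge_atTop 1] with m hm
    have hS0 : (0:ℝ) < ((S m : ℕ) : ℝ) := by
      have := le_trans hm (hS_ge m)
      exact_mod_cast lt_of_lt_of_le one_pos (by exact_mod_cast this)
    have hx0 : (0:ℝ) ≤ (s m : ℝ) := by positivity
    rw [Real.sqrt_div (sq_nonneg _), Real.sqrt_sq hx0]
    congr 1
    rw [Real.sqrt_eq_rpow, ← Real.rpow_mul hS0.le]
    congr 1
    ring
  have hzero : Tendsto (fun m => (f (S m) : ℝ) / ((S m : ℕ) : ℝ) ^ ((1 + α) / 2)) atTop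
      (nhds 0) := by
    have hSexp : Tendsto (fun m => ((S m : ℕ) : ℝ) ^ ((1 - α) / 2)) atTop atTop :=
      (tendsto_rpow_atTop (by linarith : (0:ℝ) < (1 - α) / 2)).comp hSR_tend
    have hinv : Tendsto (fun m => (((S m : ℕ) : ℝ) ^ ((1 - α) / 2))⁻¹) atTop (nhds 0) :=
      hSexp.inv_tendsto_atTop
    have hmul := hfS.mul hinv
    rw [mul_zero] at hmul
    apply hmul.congr'
    filter_upwards [eventually_ge_atTop 1] with m hm
    have hS0 : (0:ℝ) < ((S m : ℕ) : ℝ) := by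
      have := le_trans hm (hS_ge m)
      exact_mod_cast lt_of_lt_of_le one_pos (by exact_mod_cast this)
    have e : ((S m : ℕ) : ℝ) ^ α * ((S m : ℕ) : ℝ) ^ ((1 - α) / 2)
        = ((S m : ℕ) : ℝ) ^ ((1 + α) / 2) := by
      rw [← Real.rpow_add hS0]
      congr 1
      ring
    have hne1 : ((S m : ℕ) : ℝ) ^ α ≠ 0 := (Real.rpow_pos_of_pos hS0 _).ne'
    have hne2 : ((S m : ℕ) : ℝ) ^ ((1 - α) / 2) ≠ 0 := (Real.rpow_pos_of_pos hS0 _).ne'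
    have hne3 : ((S m : ℕ) : ℝ) ^ ((1 + α) / 2) ≠ 0 := (Real.rpow_pos_of_pos hS0 _).ne'
    rw [← div_eq_mul_inv, div_div, e]
  have hB' : Tendsto (fun m => (s (m + 1) : ℝ) / ((S m : ℕ) : ℝ) ^ ((1 + α) / 2)) atTop
      (nhds (Real.sqrt L)) := by
    have hsum := hB.add hzero
    rw [add_zero] at hsum
    apply hsum.congr'
    filter_upwards [hrecR] with m hrec
    rw [← add_div, ← hrec]
  -- Step C : S m ^ ((1-α)/2) / m → K
  set K : ℝ := (1 - α) / 2 * Real.sqrt L with hKdef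
  have hC : Tendsto (fun m => ((S m : ℕ) : ℝ) ^ ((1 - α) / 2) / (m : ℝ)) atTop (nhds K) := by
    refine my_stolz (x := fun m => ((S m : ℕ) : ℝ) ^ ((1 - α) / 2)) (y := fun m => (m : ℝ))
      ?_ ?_ ?_
    · exact Eventually.of_forall fun m => by
        show (m : ℝ) < ((m + 1 : ℕ) : ℝ)
        exact_mod_cast Nat.lt_succ_self m
    · exact tendsto_natCast_atTop_atTop
    · have hQ := my_slope_rpow ((1 - α) / 2) ht0 h0
      have hdiff := hQ.mul hB'
      rw [hKdef]
      apply hdiff.congr'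
      filter_upwards [ht0, eventually_ge_atTop 1] with m htm hm
      have hs'0 : (0:ℝ) < (s (m + 1) : ℝ) := by
        have := hs_ge1 (m + 1) (by omega)
        exact_mod_cast lt_of_lt_of_le one_pos (by exact_mod_cast this)
      have hS0 : (0:ℝ) < ((S m : ℕ) : ℝ) := by
        have := le_trans hm (hS_ge m)
        exact_mod_cast lt_of_lt_of_le one_pos (by exact_mod_cast this)
      have hcast : ((S (m + 1) : ℕ) : ℝ) = ((S m : ℕ) : ℝ) + (s (m + 1) : ℝ) := by
        exact_mod_cast hS_succ m
      have htm_eq : (s (m + 1) : ℝ) = ((S m : ℕ) : ℝ) * t m := by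
        rw [htdef]
        field_simp
      have hden1 : ((m + 1 : ℕ) : ℝ) - (m : ℝ) = 1 := by push_cast; ring
      rw [hden1, div_one]
      have e1 : ((S (m + 1) : ℕ) : ℝ) = ((S m : ℕ) : ℝ) * (1 + t m) := by
        rw [hcast, htm_eq]; ring
      have e2 : ((S (m + 1) : ℕ) : ℝ) ^ ((1 - α) / 2)
          = ((S m : ℕ) : ℝ) ^ ((1 - α) / 2) * (1 + t m) ^ ((1 - α) / 2) := by
        rw [e1, Real.mul_rpow hS0.le (by linarith)]
      have e4 : ((S m : ℕ) : ℝ) ^ ((1 - α) / 2) * ((S m : ℕ) : ℝ) ^ ((1 + α) / 2)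
          = ((S m : ℕ) : ℝ) := by
        rw [← Real.rpow_add hS0, show (1 - α) / 2 + (1 + α) / 2 = 1 by ring, Real.rpow_one]
      have hne2 : ((S m : ℕ) : ℝ) ^ ((1 + α) / 2) ≠ 0 := (Real.rpow_pos_of_pos hS0 _).ne'
      rw [e2, htm_eq]
      have e5 : ((S m : ℕ) : ℝ) * t m / ((S m : ℕ) : ℝ) ^ ((1 + α) / 2)
          = ((S m : ℕ) : ℝ) ^ ((1 - α) / 2) * t m := by
        rw [div_eq_iff hne2, mul_right_comm, e4]
      rw [e5]
      field_simp
  -- Final assembly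
  have hfin : Tendsto (fun m => ((s m : ℝ) / ((S m : ℕ) : ℝ) ^ ((1 + α) / 2)) *
      (((S m : ℕ) : ℝ) ^ ((1 - α) / 2) / (m : ℝ)) ^ γ) atTop (nhds (Real.sqrt L * K ^ γ)) :=
    hB.mul (hC.rpow_const (Or.inr hγ0.le))
  have heq : ∀ᶠ (m : ℕ) in atTop, ((s m : ℝ) / ((S m : ℕ) : ℝ) ^ ((1 + α) / 2)) *
      (((S m : ℕ) : ℝ) ^ ((1 - α) / 2) / (m : ℝ)) ^ γ = (s m : ℝ) / (m : ℝ) ^ γ := by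
    filter_upwards [eventually_ge_atTop 1] with m hm
    have hm0 : (0:ℝ) < (m : ℝ) := by exact_mod_cast hm
    have hS0 : (0:ℝ) < ((S m : ℕ) : ℝ) := by
      have := le_trans hm (hS_ge m)
      exact_mod_cast lt_of_lt_of_le one_pos (by exact_mod_cast this)
    have e1 : (((S m : ℕ) : ℝ) ^ ((1 - α) / 2) / (m : ℝ)) ^ γ
        = ((S m : ℕ) : ℝ) ^ ((1 + α) / 2) / (m : ℝ) ^ γ := by
      rw [Real.div_rpow (Real.rpow_nonneg hS0.le _) hm0.le, ← Real.rpow_mul hS0.le]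
      congr 2
      rw [hγdef]
      field_simp
    rw [e1]
    have hne1 : ((S m : ℕ) : ℝ) ^ ((1 + α) / 2) ≠ 0 := (Real.rpow_pos_of_pos hS0 _).ne'
    have hne2 : (m : ℝ) ^ γ ≠ 0 := (Real.rpow_pos_of_pos hm0 _).ne'
    field_simp
  have hDval : Real.sqrt L * K ^ γ = (a * (1 - α) ^ (1 + α) / (2 ^ α * (1 + α))) ^ (1 / (1 - α)) := by
    have hsL : (0:ℝ) < Real.sqrt L := Real.sqrt_pos.2 hL0
    have hK : (0:ℝ) < K := by
      rw [hKdef]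
      exact mul_pos (by linarith) hsL
    have h1a : (0:ℝ) < (1 - α) ^ (1 + α) := Real.rpow_pos_of_pos h1α _
    have h2a : (0:ℝ) < (2:ℝ) ^ α := Real.rpow_pos_of_pos two_pos _
    have hbase : (0:ℝ) < a * (1 - α) ^ (1 + α) / (2 ^ α * (1 + α)) := by positivity
    have hLHS : (0:ℝ) < Real.sqrt L * K ^ γ := mul_pos hsL (Real.rpow_pos_of_pos hK _)
    have hRHS : (0:ℝ) < (a * (1 - α) ^ (1 + α) / (2 ^ α * (1 + α))) ^ (1 / (1 - α)) :=
      Real.rpow_pos_of_pos hbase _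
    have l1 : Real.log L = Real.log 2 + Real.log a - Real.log (1 + α) := by
      rw [hLdef, Real.log_div (by positivity) h1α'.ne', Real.log_mul two_ne_zero ha.ne']
    have l2 : Real.log K = Real.log (1 - α) - Real.log 2 + Real.log L / 2 := by
      rw [hKdef, Real.log_mul (by positivity) hsL.ne', Real.log_div h1α.ne' two_ne_zero,
        Real.log_sqrt hL0.le]
    have l3 : Real.log (a * (1 - α) ^ (1 + α) / (2 ^ α * (1 + α)))
        = Real.log a + (1 + α) * Real.log (1 - α) - (α * Real.log 2 + Real.log (1 + α)) := by
      rw [Real.log_div (by positivity) (by positivity), Real.log_mul ha.ne' h1a.ne',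
        Real.log_mul h2a.ne' h1α'.ne', Real.log_rpow h1α, Real.log_rpow two_pos]
    have hlog : Real.log (Real.sqrt L * K ^ γ)
        = Real.log ((a * (1 - α) ^ (1 + α) / (2 ^ α * (1 + α))) ^ (1 / (1 - α))) := by
      rw [Real.log_mul hsL.ne' (Real.rpow_pos_of_pos hK γ).ne', Real.log_rpow hK,
        Real.log_rpow hbase, Real.log_sqrt hL0.le, l3, l2, l1, hγdef]
      field_simp
      ring
    calc Real.sqrt L * K ^ γ = Real.exp (Real.log (Real.sqrt L * K ^ γ)) :=
          (Real.exp_log hLHS).symm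
      _ = Real.exp (Real.log ((a * (1 - α) ^ (1 + α) / (2 ^ α * (1 + α))) ^ (1 / (1 - α)))) := by
          rw [hlog]
      _ = (a * (1 - α) ^ (1 + α) / (2 ^ α * (1 + α))) ^ (1 / (1 - α)) := Real.exp_log hRHS
  rw [← hDval]
  exact hfin.congr' heq
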